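/- For all natural numbers n, k, i, w with k ≤ n and i ≤ n, the following binomial coefficient identity holds: ∑_{s=0}^{w} binom(k, s)·binom(n−k+s, i)·binom(i, w−s) = ∑_{s=0}^{min(w, i)} binom(k, w−s)·binom(n+s−i, s)·binom(n−k, i−s). -/

import Mathlib

open Finset

/-- Vandermonde's identity in `range` form. -/
lemma vanderR (a b c : ℕ) :
    (a + b).choose c = ∑ t ∈ Finset.range (c + 1), a.choose t * b.choose (c - t) := by
  rw [Nat.add_choose_eq, Finset.Nat.sum_antidiagonal_eq_sum_range_succ_mk]

/-- Trinomial revision, valid unconditionally in ℕ given `t ≤ s`. -/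
lemma tri (k s t : ℕ) (h : t ≤ s) :
    k.choose s * s.choose t = k.choose t * (k - t).choose (s - t) := by
  rcases le_or_gt s k with hs | hs
  · exact Nat.choose_mul h
  · rw [Nat.choose_eq_zero_of_lt hs, Nat.zero_mul]
    rcases le_or_gt t k with ht | ht
    · rw [Nat.choose_eq_zero_of_lt (by omega : k - t < s - t), Nat.mul_zero]
    · rw [Nat.choose_eq_zero_of_lt ht, Nat.zero_mul]

/-- Trinomial revision, second form, unconditional in ℕ. -/
lemma tri2 (m a b : ℕ) :
    m.choose a * (m - a).choose b = m.choose (a + b) * (a + b).choose a := by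
  rcases le_or_gt (a + b) m with h | h
  · rw [Nat.choose_mul (n := m) le_self_add, Nat.add_sub_cancel_left]
  · rcases le_or_gt a m with ha | ha
    · rw [Nat.choose_eq_zero_of_lt h, Nat.zero_mul,
        Nat.choose_eq_zero_of_lt (by omega : m - a < b), Nat.mul_zero]
    · rw [Nat.choose_eq_zero_of_lt ha, Nat.zero_mul,
        Nat.choose_eq_zero_of_lt (by omega : m < a + b), Nat.zero_mul]

/-- Shifted Vandermonde: `∑_{s≤w} C(k,s) C(s,t) C(i,w−s) = C(k,t) C(k−t+i, w−t)` for `t ≤ w`. -/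
lemma innerA (k i w t : ℕ) (h : t ≤ w) :
    ∑ s ∈ Finset.range (w + 1), k.choose s * s.choose t * i.choose (w - s) =
      k.choose t * ((k - t) + i).choose (w - t) := by
  rw [← Finset.sum_range_add_sum_Ico _ (show t ≤ w + 1 by omega)]
  have h0 : ∑ s ∈ Finset.range t, k.choose s * s.choose t * i.choose (w - s) = 0 :=
    Finset.sum_eq_zero fun s hs => by
      rw [Nat.choose_eq_zero_of_lt (Finset.mem_range.mp hs), Nat.mul_zero, Nat.zero_mul]
  rw [h0, Nat.zero_add, Finset.sum_Ico_eq_sum_range]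
  have hr : w + 1 - t = (w - t) + 1 := by omega
  rw [hr, vanderR (k - t) i (w - t), Finset.mul_sum]
  refine Finset.sum_congr rfl fun j hj => ?_
  have hj' : j ≤ w - t := by simpa [Nat.lt_succ_iff] using hj
  rw [tri k (t + j) t (Nat.le_add_right t j), Nat.add_sub_cancel_left]
  have : w - (t + j) = (w - t) - j := by omega
  rw [this, Nat.mul_assoc]

/-- Left-hand side reduces to the middle form `M`. -/
lemma L_eq_M (m k i w : ℕ) :
    ∑ s ∈ Finset.range (w + 1), k.choose s * (m + s).choose i * i.choose (w - s) =
      ∑ t ∈ Finset.range (min w i + 1),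
        k.choose t * m.choose (i - t) * ((k - t) + i).choose (w - t) := by
  have step1 : ∀ s, k.choose s * (m + s).choose i * i.choose (w - s) =
      ∑ t ∈ Finset.range (i + 1),
        m.choose (i - t) * (k.choose s * s.choose t * i.choose (w - s)) := by
    intro s
    rw [Nat.add_comm m s, vanderR s m i, Finset.mul_sum, Finset.sum_mul]
    exact Finset.sum_congr rfl fun t _ => by ring
  simp only [step1]
  rw [Finset.sum_comm]
  have step2 : ∀ t ∈ Finset.range (i + 1),
      ∑ s ∈ Finset.range (w + 1),
        m.choose (i - t) * (k.choose s * s.choose t * i.choose (w - s)) =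
      if t ≤ w then k.choose t * m.choose (i - t) * ((k - t) + i).choose (w - t) else 0 := by
    intro t _
    rw [← Finset.mul_sum]
    split_ifs with h
    · rw [innerA k i w t h]; ring
    · have : ∑ s ∈ Finset.range (w + 1), k.choose s * s.choose t * i.choose (w - s) = 0 :=
        Finset.sum_eq_zero fun s hs => by
          rw [Nat.choose_eq_zero_of_lt (show s < t by have := Finset.mem_range.mp hs; omega), Nat.mul_zero, Nat.zero_mul]
      rw [this, Nat.mul_zero]
  rw [Finset.sum_congr rfl step2]
  rw [← Finset.sum_subset (Finset.range_subset_range.mpr (by omega : min w i + 1 ≤ i + 1))]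
  · refine Finset.sum_congr rfl fun t ht => ?_
    have : t ≤ w := by have := Finset.mem_range.mp ht; omega
    simp [this]
  · intro t ht hnt
    have h1 := Finset.mem_range.mp ht
    have h2 : ¬ t ≤ w := by
      have := Finset.mem_range.mp (show t ∈ Finset.range (i+1) from ht)
      intro hc
      exact hnt (Finset.mem_range.mpr (by omega))
    simp [h2]

/-- Right-hand side reduces to the middle form `M`. -/
lemma R_eq_M (n k i w : ℕ) (hk : k ≤ n) (hi : i ≤ n) :
    ∑ s ∈ Finset.range (min w i + 1),
        k.choose (w - s) * (n + s - i).choose s * (n - k).choose (i - s) =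
      ∑ t ∈ Finset.range (min w i + 1),
        k.choose t * (n - k).choose (i - t) * ((k - t) + i).choose (w - t) := by
  set N := min w i + 1 with hN
  set m := n - k with hm
  -- Step A: pointwise expansion
  have stepA : ∀ s ∈ Finset.range N,
      k.choose (w - s) * (n + s - i).choose s * m.choose (i - s) =
      ∑ u ∈ Finset.range (s + 1),
        k.choose u * m.choose (i - u) * (k.choose (w - s) * (i - u).choose (i - s)) := by
    intro s hs
    have hs' : s ≤ min w i := by have := Finset.mem_range.mp hs; omega
    by_cases hks : k ≤ n + s - i
    · have hb : n + s - i = k + (m - (i - s)) := by omega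
      rw [hb, vanderR k (m - (i - s)) s, Finset.mul_sum, Finset.sum_mul]
      refine Finset.sum_congr rfl fun u hu => ?_
      have hu' : u ≤ s := by have := Finset.mem_range.mp hu; omega
      have key : m.choose (i - s) * (m - (i - s)).choose (s - u) =
          m.choose (i - u) * (i - u).choose (i - s) := by
        rw [tri2 m (i - s) (s - u), (by omega : (i - s) + (s - u) = i - u)]
      calc k.choose (w - s) * (k.choose u * (m - (i - s)).choose (s - u)) * m.choose (i - s)
          = k.choose u * (m.choose (i - s) * (m - (i - s)).choose (s - u)) * k.choose (w - s) := by
            ring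
        _ = k.choose u * m.choose (i - u) * (k.choose (w - s) * (i - u).choose (i - s)) := by
            rw [key]; ring
    · have h1 : m < i - s := by omega
      have hL : m.choose (i - s) = 0 := Nat.choose_eq_zero_of_lt h1
      rw [hL, Nat.mul_zero]
      refine (Finset.sum_eq_zero fun u hu => ?_).symm
      have hu' : u ≤ s := by have := Finset.mem_range.mp hu; omega
      have h2 : m < i - u := by omega
      simp [Nat.choose_eq_zero_of_lt h2]
  rw [Finset.sum_congr rfl stepA]
  -- Step B: pad the inner sum and swap
  have stepB : ∀ s ∈ Finset.range N,
      ∑ u ∈ Finset.range (s + 1),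
        k.choose u * m.choose (i - u) * (k.choose (w - s) * (i - u).choose (i - s)) =
      ∑ u ∈ Finset.range N,
        k.choose u * m.choose (i - u) * (k.choose (w - s) * (i - u).choose (i - s)) := by
    intro s hs
    have hs' : s ≤ min w i := by have := Finset.mem_range.mp hs; omega
    refine Finset.sum_subset (Finset.range_subset_range.mpr (by omega)) fun u hu hnu => ?_
    have h1 : s < u := by
      have := Finset.mem_range.mp hu
      by_contra hc; exact hnu (Finset.mem_range.mpr (by omega))
    have h2 : u ≤ min w i := by have := Finset.mem_range.mp hu; omega
    have h3 : i - u < i - s := by omega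
    simp [Nat.choose_eq_zero_of_lt h3]
  rw [Finset.sum_congr rfl stepB, Finset.sum_comm]
  -- Step C: evaluate the inner sum for each u
  refine Finset.sum_congr rfl fun u hu => ?_
  have hu' : u ≤ min w i := by have := Finset.mem_range.mp hu; omega
  have inner : ∑ s ∈ Finset.range N, k.choose (w - s) * (i - u).choose (i - s) =
      ((i - u) + k).choose (w - u) := by
    rw [← Finset.sum_range_add_sum_Ico _ (show u ≤ N by omega)]
    have h0 : ∑ s ∈ Finset.range u, k.choose (w - s) * (i - u).choose (i - s) = 0 :=
      Finset.sum_eq_zero fun s hs => by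
        have hsu : s < u := Finset.mem_range.mp hs
        have : i - u < i - s := by omega
        simp [Nat.choose_eq_zero_of_lt this]
    rw [h0, Nat.zero_add, Finset.sum_Ico_eq_sum_range]
    have congr1 : ∑ j ∈ Finset.range (N - u), k.choose (w - (u + j)) * (i - u).choose (i - (u + j)) =
        ∑ j ∈ Finset.range (N - u), (i - u).choose j * k.choose ((w - u) - j) := by
      refine Finset.sum_congr rfl fun j hj => ?_
      have hj' : j ≤ min w i - u := by have := Finset.mem_range.mp hj; omega
      have e1 : i - (u + j) = (i - u) - j := by omega
      have e2 : w - (u + j) = (w - u) - j := by omega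
      rw [e1, e2, Nat.choose_symm (by omega : j ≤ i - u), Nat.mul_comm]
    rw [congr1]
    refine (Finset.sum_subset (Finset.range_subset_range.mpr (by omega : N - u ≤ w - u + 1))
      (fun j hj hnj => ?_)).trans (vanderR (i - u) k (w - u)).symm
    have h1 : j ≤ w - u := by have := Finset.mem_range.mp hj; omega
    have h2 : min w i - u < j := by
      have := Finset.mem_range.mp hj
      by_contra hc; exact hnj (Finset.mem_range.mpr (by omega))
    have h3 : i - u < j := by omega
    simp [Nat.choose_eq_zero_of_lt h3]
  rw [show (∑ s ∈ Finset.range N, k.choose u * m.choose (i - u) * (k.choose (w - s) * (i - u).choose (i - s))) = k.choose u * m.choose (i - u) * ∑ s ∈ Finset.range N, k.choose (w - s) * (i - u).choose (i - s) from (Finset.mul_sum _ _ _).symm, inner]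
  rcases le_or_gt u k with huk | huk
  · rw [(by omega : (i - u) + k = (k - u) + i)]
  · simp [Nat.choose_eq_zero_of_lt huk]

/-- The binomial coefficient identity needed for shift-invariance in the `λ`-umbral calculus:
`∑_{s=0}^{w} binom(k,s)·binom(n−k+s,i)·binom(i,w−s)
  = ∑_{s=0}^{min(w,i)} binom(k,w−s)·binom(n+s−i,s)·binom(n−k,i−s)`. -/
theorem choose_shift_identity (n k i w : ℕ) (hk : k ≤ n) (hi : i ≤ n) :
    ∑ s ∈ Finset.range (w + 1), k.choose s * (n - k + s).choose i * i.choose (w - s) =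
      ∑ s ∈ Finset.range (min w i + 1),
        k.choose (w - s) * (n + s - i).choose s * (n - k).choose (i - s) := by
  rw [L_eq_M (n - k) k i w]
  exact (R_eq_M n k i w hk hi).symm
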